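/- Let (x_j)_{j∈J} be a frame for a finite-dimensional real inner product space H, let λ>0 and α>0. If for every x∈H with ‖x‖<α the subfamily (x_j)_{j∈J_λ^♯(x)} with J_λ^♯(x)={j∈J : |⟨x,x_j⟩|<λ} is a frame of H, then the map x ↦ (φ_λ(⟨x,x_j⟩))_{j∈J} is injective on the closed ball αB_H (i.e., the frame does λ-saturation recovery on αB_H). -/

import Mathlib

local notation "⟪" x ", " y "⟫" => @inner ℝ _ _ x y

/-- The saturation function `φ_λ`: `φ_λ(t) = t` if `|t| ≤ λ` and `φ_λ(t) = sign(t)·λ` else. -/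
noncomputable def satur (l t : ℝ) : ℝ := max (-l) (min l t)

lemma satur_cases (l a : ℝ) (hl : 0 < l) :
    satur l a = a ∧ -l ≤ a ∧ a ≤ l ∨ satur l a = -l ∧ a ≤ -l ∨ satur l a = l ∧ l ≤ a := by
  have hll : -l ≤ l := by linarith
  unfold satur
  rcases le_total a l with h1 | h1
  · rcases le_total (-l) a with h3 | h3
    · exact Or.inl ⟨by rw [min_eq_right h1, max_eq_right h3], h3, h1⟩
    · exact Or.inr (Or.inl ⟨by rw [min_eq_right h1, max_eq_left h3], h3⟩)
  · exact Or.inr (Or.inr ⟨by rw [min_eq_left h1, max_eq_right hll], h1⟩)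

lemma satur_inj_aux {l a b : ℝ} (hl : 0 < l) (h : satur l a = satur l b)
    (hm : |a + b| < 2 * l) : a = b := by
  rw [abs_lt] at hm
  rcases satur_cases l a hl with ⟨ea, h1, h2⟩ | ⟨ea, h1⟩ | ⟨ea, h1⟩ <;>
    rcases satur_cases l b hl with ⟨eb, h3, h4⟩ | ⟨eb, h3⟩ | ⟨eb, h3⟩ <;>
    rw [ea, eb] at h <;> linarith [hm.1, hm.2]

theorem open_unsaturated_frame_implies_saturation_recovery
    {H : Type*} [NormedAddCommGroup H] [InnerProductSpace ℝ H] [FiniteDimensional ℝ H]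
    {J : Type*} (xv : J → H) (lam α : ℝ) (hlam : 0 < lam) (hα : 0 < α)
    (hframe : ∃ A B : ℝ, 0 < A ∧ 0 < B ∧ ∀ y : H,
      A * ‖y‖ ^ 2 ≤ ∑' j, ⟪y, xv j⟫ ^ 2 ∧ ∑' j, ⟪y, xv j⟫ ^ 2 ≤ B * ‖y‖ ^ 2)
    (hyp : ∀ x : H, ‖x‖ < α →
      Submodule.span ℝ (xv '' {j : J | |⟪x, xv j⟫| < lam}) = ⊤) :
    Set.InjOn (fun x : H => fun j : J => satur lam ⟪x, xv j⟫)
      (Metric.closedBall (0 : H) α) := by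
  intro x hx y hy h
  rw [Metric.mem_closedBall, dist_zero_right] at hx hy
  by_cases hc : ‖(2:ℝ)⁻¹ • (x + y)‖ < α
  · set m := (2:ℝ)⁻¹ • (x + y) with hm
    have key : ∀ j, |⟪m, xv j⟫| < lam → ⟪x - y, xv j⟫ = 0 := by
      intro j hj
      have hj' : |⟪x, xv j⟫ + ⟪y, xv j⟫| < 2 * lam := by
        have : ⟪m, xv j⟫ = (2:ℝ)⁻¹ * (⟪x, xv j⟫ + ⟪y, xv j⟫) := by
          rw [hm, real_inner_smul_left, inner_add_left]
        rw [this, abs_mul] at hj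
        rw [abs_of_pos (by norm_num : (0:ℝ) < 2⁻¹)] at hj
        linarith
      have heq := satur_inj_aux hlam (congrFun h j) hj'
      rw [inner_sub_left, heq, sub_self]
    have hsp := hyp m hc
    have horth : ∀ w ∈ Submodule.span ℝ (xv '' {j : J | |⟪m, xv j⟫| < lam}),
        ⟪x - y, w⟫ = 0 := by
      intro w hw
      induction hw using Submodule.span_induction with
      | mem w hw => obtain ⟨j, hj, rfl⟩ := hw; exact key j hj
      | zero => simp
      | add u v _ _ hu hv => rw [inner_add_right, hu, hv, add_zero]
      | smul c u _ hu => rw [real_inner_smul_right, hu, mul_zero]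
    have hz : ⟪x - y, x - y⟫ = 0 := horth _ (hsp ▸ Submodule.mem_top)
    have := inner_self_eq_zero.mp hz
    exact sub_eq_zero.mp this
  · push_neg at hc
    have hxy : ‖x + y‖ ≥ 2 * α := by
      rw [norm_smul] at hc
      simp only [norm_inv, Real.norm_ofNat] at hc
      linarith [hc]
    have par := parallelogram_law_with_norm ℝ x y
    have par2 : ‖x + y‖ ^ 2 + ‖x - y‖ ^ 2 = 2 * (‖x‖ ^ 2 + ‖y‖ ^ 2) := by
      exact par
    have hx2 : ‖x‖ ^ 2 ≤ α ^ 2 := by nlinarith [norm_nonneg x]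
    have hy2 : ‖y‖ ^ 2 ≤ α ^ 2 := by nlinarith [norm_nonneg y]
    have hxy2 : (2 * α) ^ 2 ≤ ‖x + y‖ ^ 2 := by nlinarith [norm_nonneg (x + y), hα.le]
    have h0 : ‖x - y‖ ^ 2 ≤ 0 := by nlinarith
    have : ‖x - y‖ = 0 := by nlinarith [norm_nonneg (x - y), sq_nonneg (‖x - y‖)]
    exact sub_eq_zero.mp (norm_eq_zero.mp this)
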